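/- arXiv:1209.4095 — 3 statements merged into one kernel-verified Lean document; each statement's English description precedes it below -/
import Mathlib

section
/- Let B be an n×n exchange matrix, let R be one of ℤ, ℚ, ℝ, and suppose (b_i : i ∈ I) and (b'_j : j ∈ J) are both positive R-bases for B. Then they agree up to scaling each basis element by a positive unit of R: there is a bijection σ : I → J and positive units u_i of R with b'_{σ(i)} = u_i·b_i for all i ∈ I. -/
open scoped BigOperators

namespace MutationFanPaper

/-- An exchange matrix: a skew-symmetrizable `n × n` integer matrix. -/
def IsExchangeMatrix {n : ℕ} (B : Matrix (Fin n) (Fin n) ℤ) : Prop :=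
  ∃ d : Fin n → ℤ, (∀ i, 0 < d i) ∧ ∀ i j, d i * B i j = -(d j * B j i)

/-- Matrix mutation in direction `k`. -/
def mutate {n : ℕ} (B : Matrix (Fin n) (Fin n) ℤ) (k : Fin n) : Matrix (Fin n) (Fin n) ℤ :=
  fun i j =>
    if i = k ∨ j = k then -B i j
    else B i j + Int.sign (B k j) * max (B i k * B k j) 0

/-- The mutation map `η_k^B : ℝⁿ → ℝⁿ`. -/
noncomputable def etaStep {n : ℕ} (B : Matrix (Fin n) (Fin n) ℤ) (k : Fin n) (a : Fin n → ℝ) : Fin n → ℝ :=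
  fun j =>
    if j = k then -a k
    else if 0 ≤ a k ∧ 0 ≤ B k j then a j + a k * (B k j : ℝ)
    else if a k ≤ 0 ∧ B k j ≤ 0 then a j - a k * (B k j : ℝ)
    else a j

/-- `etaSeq B κ` is the mutation map `η_κ^B`, where the list `κ` records the indices in
order of application (the head of the list is applied first, using the matrix `B` itself). -/
noncomputable def etaSeq {n : ℕ} (B : Matrix (Fin n) (Fin n) ℤ) : List (Fin n) → (Fin n → ℝ) → Fin n → ℝ
  | [], a => a
  | k :: κ, a => etaSeq (mutate B k) κ (etaStep B k a)

/-- Iterated matrix mutation along a list of indices; the head is applied first. -/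
def mutateSeq {n : ℕ} (B : Matrix (Fin n) (Fin n) ℤ) : List (Fin n) → Matrix (Fin n) (Fin n) ℤ
  | [] => B
  | k :: κ => mutateSeq (mutate B k) κ

/-- The copy of ℤ inside ℝ, as a subring. -/
def intSR : Subring ℝ := (Int.castRingHom ℝ).range

/-- The copy of ℚ inside ℝ, as a subring. -/
noncomputable def ratSR : Subring ℝ := (Rat.castHom ℝ).range

/-- The formal expression `Σ_{i ∈ S} c i • v i` is a `B`-coherent linear relation. -/
def IsBCoherentRel {n : ℕ} (B : Matrix (Fin n) (Fin n) ℤ) {ι : Type*} (S : Finset ι)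
    (v : ι → Fin n → ℝ) (c : ι → ℝ) : Prop :=
  ∀ κ : List (Fin n),
    (∑ i ∈ S, c i • etaSeq B κ (v i)) = 0 ∧
    (∑ i ∈ S, c i • (fun j => min (etaSeq B κ (v i) j) 0)) = 0

/-- The formal expression `a - Σ_{i ∈ S} c i • v i` is a `B`-coherent linear relation. -/
def IsBCoherentDiff {n : ℕ} (B : Matrix (Fin n) (Fin n) ℤ) (a : Fin n → ℝ) {ι : Type*}
    (S : Finset ι) (v : ι → Fin n → ℝ) (c : ι → ℝ) : Prop :=
  ∀ κ : List (Fin n),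
    (etaSeq B κ a - ∑ i ∈ S, c i • etaSeq B κ (v i)) = 0 ∧
    ((fun j => min (etaSeq B κ a j) 0) -
      ∑ i ∈ S, c i • (fun j => min (etaSeq B κ (v i) j) 0)) = 0

/-- The family `b` is an `R`-spanning set for `B` (a family of vectors in `Rⁿ` such that every
`a ∈ Rⁿ` admits a `B`-coherent relation `a - Σ_{i ∈ S} c i • b i` with coefficients in `R`). -/
def SpanningOver {n : ℕ} (R : Subring ℝ) (B : Matrix (Fin n) (Fin n) ℤ) {ι : Type*}
    (b : ι → Fin n → ℝ) : Prop :=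
  (∀ i j, b i j ∈ R) ∧
  ∀ a : Fin n → ℝ, (∀ j, a j ∈ R) →
    ∃ (S : Finset ι) (c : ι → ℝ), (∀ i ∈ S, c i ∈ R) ∧ IsBCoherentDiff B a S b c

/-- The family `b` is an `R`-independent set for `B`. -/
def IndependentOver {n : ℕ} (R : Subring ℝ) (B : Matrix (Fin n) (Fin n) ℤ) {ι : Type*}
    (b : ι → Fin n → ℝ) : Prop :=
  (∀ i j, b i j ∈ R) ∧
  ∀ (S : Finset ι) (c : ι → ℝ), (∀ i ∈ S, c i ∈ R) → IsBCoherentRel B S b c →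
    ∀ i ∈ S, c i = 0

/-- The family `b` is an `R`-basis for `B`. -/
def BasisOver {n : ℕ} (R : Subring ℝ) (B : Matrix (Fin n) (Fin n) ℤ) {ι : Type*}
    (b : ι → Fin n → ℝ) : Prop :=
  SpanningOver R B b ∧ IndependentOver R B b

/-- The family `b` is a positive `R`-basis for `B`. -/
def PositiveBasisOver {n : ℕ} (R : Subring ℝ) (B : Matrix (Fin n) (Fin n) ℤ) {ι : Type*}
    (b : ι → Fin n → ℝ) : Prop :=
  BasisOver R B b ∧
  ∀ a : Fin n → ℝ, (∀ j, a j ∈ R) →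
    ∃ (S : Finset ι) (c : ι → ℝ), (∀ i ∈ S, c i ∈ R ∧ 0 ≤ c i) ∧ IsBCoherentDiff B a S b c

/-- The relation `a ≡^B a'`: all mutation maps give componentwise equal signs. -/
def eqB {n : ℕ} (B : Matrix (Fin n) (Fin n) ℤ) (a a' : Fin n → ℝ) : Prop :=
  ∀ (κ : List (Fin n)) (j : Fin n),
    Real.sign (etaSeq B κ a j) = Real.sign (etaSeq B κ a' j)

/-- A `B`-class: an equivalence class of `≡^B`. -/
def IsBClass {n : ℕ} (B : Matrix (Fin n) (Fin n) ℤ) (C : Set (Fin n → ℝ)) : Prop :=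
  ∃ a, C = {a' | eqB B a a'}

/-- A `B`-cone: the closure of a `B`-class. -/
def IsBCone {n : ℕ} (B : Matrix (Fin n) (Fin n) ℤ) (C : Set (Fin n → ℝ)) : Prop :=
  ∃ D, IsBClass B D ∧ C = closure D

/-- A convex cone: a set closed under addition and positive scaling. -/
def IsConvexCone {n : ℕ} (C : Set (Fin n → ℝ)) : Prop :=
  (∀ x ∈ C, ∀ y ∈ C, x + y ∈ C) ∧ ∀ x ∈ C, ∀ r : ℝ, 0 < r → r • x ∈ C

/-- `F` is a face of the convex cone `C`: a convex subset such that any line segment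
contained in `C` whose interior meets `F` lies entirely in `F`. -/
def IsFaceOf {n : ℕ} (C F : Set (Fin n → ℝ)) : Prop :=
  F ⊆ C ∧ Convex ℝ F ∧
    ∀ x y : Fin n → ℝ, segment ℝ x y ⊆ C → (openSegment ℝ x y ∩ F).Nonempty →
      segment ℝ x y ⊆ F

/-- The mutation fan `ℱ_B`: all `B`-cones and all faces of `B`-cones. -/
def MutFan {n : ℕ} (B : Matrix (Fin n) (Fin n) ℤ) : Set (Set (Fin n → ℝ)) :=
  {C | IsBCone B C ∨ ∃ D, IsBCone B D ∧ IsFaceOf D C}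

/-- A fan: a collection of closed convex cones, closed under taking faces, in which the
intersection of any two cones is a face of each. -/
def IsFan {n : ℕ} (F : Set (Set (Fin n → ℝ))) : Prop :=
  (∀ C ∈ F, IsClosed C ∧ IsConvexCone C) ∧
  (∀ C ∈ F, ∀ G, IsFaceOf C G → G ∈ F) ∧
  ∀ C ∈ F, ∀ D ∈ F, IsFaceOf C (C ∩ D) ∧ IsFaceOf D (C ∩ D)

/-- A set of vectors is sign-coherent if no two of its members have strictly opposite
signs in any coordinate. -/
def SignCoherentSet {n : ℕ} (S : Set (Fin n → ℝ)) : Prop :=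
  ∀ x ∈ S, ∀ y ∈ S, ∀ j, ¬(x j < 0 ∧ 0 < y j)

/-- The ray spanned by a vector `v`. -/
def rayOf {n : ℕ} (v : Fin n → ℝ) : Set (Fin n → ℝ) :=
  {x | ∃ t : ℝ, 0 ≤ t ∧ x = t • v}

/-- `C` is a ray of the fan `F`: a one-dimensional cone belonging to `F`. -/
def IsRayOf {n : ℕ} (F : Set (Set (Fin n → ℝ))) (C : Set (Fin n → ℝ)) : Prop :=
  C ∈ F ∧ ∃ v : Fin n → ℝ, v ≠ 0 ∧ C = rayOf v

/-- A simplicial cone: the nonnegative span of finitely many linearly independent vectors. -/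
def IsSimplicialCone {n : ℕ} (C : Set (Fin n → ℝ)) : Prop :=
  ∃ (k : ℕ) (v : Fin k → Fin n → ℝ), LinearIndependent ℝ v ∧
    C = {x | ∃ c : Fin k → ℝ, (∀ i, 0 ≤ c i) ∧ x = ∑ i, c i • v i}

/-- A rational cone: the nonnegative span of finitely many rational vectors. -/
def IsRationalCone {n : ℕ} (C : Set (Fin n → ℝ)) : Prop :=
  ∃ (k : ℕ) (v : Fin k → Fin n → ℝ), (∀ i j, ∃ q : ℚ, v i j = (q : ℝ)) ∧
    C = {x | ∃ c : Fin k → ℝ, (∀ i, 0 ≤ c i) ∧ x = ∑ i, c i • v i}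

/-- `F'` is the rational part of the fan `F`. -/
def IsRationalPart {n : ℕ} (F F' : Set (Set (Fin n → ℝ))) : Prop :=
  IsFan F' ∧ (∀ C ∈ F', IsRationalCone C) ∧
  (∀ C ∈ F', ∃ D ∈ F, C ⊆ D) ∧
  ∀ C ∈ F, ∃ D ∈ F', D ⊆ C ∧ (∀ D' ∈ F', D' ⊆ C → D' ⊆ D) ∧
    ∀ x ∈ C, (∀ j, ∃ q : ℚ, x j = (q : ℝ)) → x ∈ D

/-- `v` is the smallest nonzero integer vector in the cone `C`. -/
def IsSmallestIntVec {n : ℕ} (C : Set (Fin n → ℝ)) (v : Fin n → ℝ) : Prop :=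
  v ∈ C ∧ v ≠ 0 ∧ (∀ j, ∃ m : ℤ, v j = (m : ℝ)) ∧
    ∀ w ∈ C, w ≠ 0 → (∀ j, ∃ m : ℤ, w j = (m : ℝ)) → ‖v‖ ≤ ‖w‖

end MutationFanPaper

namespace MutationFanPaper

section AuxUnique

variable {n : ℕ} {B : Matrix (Fin n) (Fin n) ℤ}

private lemma sum_swap_smul' {J I : Type} (S : Finset J) (U : Finset I)
    (c : J → ℝ) (d : J → I → ℝ) (Z : I → Fin n → ℝ) :
    ∑ j ∈ S, c j • (∑ k ∈ U, d j k • Z k) = ∑ k ∈ U, (∑ j ∈ S, c j * d j k) • Z k := by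
  simp only [Finset.smul_sum, smul_smul, Finset.sum_smul]
  exact Finset.sum_comm

private lemma coherentDiff_congr' {I : Type} (bI : I → Fin n → ℝ) (a : Fin n → ℝ)
    (S : Finset I) (c c' : I → ℝ) (h : ∀ k ∈ S, c k = c' k)
    (H : IsBCoherentDiff B a S bI c) : IsBCoherentDiff B a S bI c' := by
  intro κ
  obtain ⟨H1, H2⟩ := H κ
  constructor
  · rw [show (∑ i ∈ S, c' i • etaSeq B κ (bI i)) = ∑ i ∈ S, c i • etaSeq B κ (bI i) from
      Finset.sum_congr rfl fun k hk => by rw [h k hk]]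
    exact H1
  · rw [show (∑ i ∈ S, c' i • (fun j => min (etaSeq B κ (bI i) j) 0))
        = ∑ i ∈ S, c i • (fun j => min (etaSeq B κ (bI i) j) 0) from
      Finset.sum_congr rfl fun k hk => by rw [h k hk]]
    exact H2

private lemma coherentDiff_comp' {I J : Type} [DecidableEq I]
    (bI : I → Fin n → ℝ) (bJ : J → Fin n → ℝ)
    (a : Fin n → ℝ) (S : Finset J) (c : J → ℝ)
    (T : J → Finset I) (d : J → I → ℝ)
    (hd0 : ∀ j k, k ∉ T j → d j k = 0)
    (ha : IsBCoherentDiff B a S bJ c)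
    (hbj : ∀ j ∈ S, IsBCoherentDiff B (bJ j) (T j) bI (d j)) :
    IsBCoherentDiff B a (S.biUnion T) bI (fun k => ∑ j ∈ S, c j * d j k) := by
  intro κ
  have main : ∀ X : (Fin n → ℝ) → (Fin n → ℝ),
      (X a - ∑ j ∈ S, c j • X (bJ j)) = 0 →
      (∀ j ∈ S, (X (bJ j) - ∑ k ∈ T j, d j k • X (bI k)) = 0) →
      (X a - ∑ k ∈ S.biUnion T, (∑ j ∈ S, c j * d j k) • X (bI k)) = 0 := by
    intro X h1 h2
    rw [sub_eq_zero] at h1 ⊢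
    rw [h1, ← sum_swap_smul']
    refine Finset.sum_congr rfl fun j hj => ?_
    have h2' := sub_eq_zero.mp (h2 j hj)
    rw [h2', Finset.sum_subset (Finset.subset_biUnion_of_mem T hj)
      (fun k _ hk => by rw [hd0 j k hk, zero_smul])]
  exact ⟨main (etaSeq B κ) (ha κ).1 (fun j hj => (hbj j hj κ).1),
    main (fun v => fun j' => min (etaSeq B κ v j') 0) (ha κ).2 (fun j hj => (hbj j hj κ).2)⟩

private lemma coherentDiff_self' {I : Type} [DecidableEq I] (bI : I → Fin n → ℝ) (i : I) :
    IsBCoherentDiff B (bI i) {i} bI (fun k => if k = i then 1 else 0) := by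
  intro κ
  constructor <;> simp

private lemma coherentDiff_unique' {I : Type} [DecidableEq I] (R : Subring ℝ)
    (bI : I → Fin n → ℝ) (hInd : IndependentOver R B bI) (a : Fin n → ℝ)
    (S₁ S₂ : Finset I) (c₁ c₂ : I → ℝ)
    (h₁R : ∀ k, c₁ k ∈ R) (h₂R : ∀ k, c₂ k ∈ R)
    (h₁z : ∀ k, k ∉ S₁ → c₁ k = 0) (h₂z : ∀ k, k ∉ S₂ → c₂ k = 0)
    (h₁ : IsBCoherentDiff B a S₁ bI c₁) (h₂ : IsBCoherentDiff B a S₂ bI c₂) :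
    ∀ k, c₁ k = c₂ k := by
  have hrel : IsBCoherentRel B (S₁ ∪ S₂) bI (fun k => c₁ k - c₂ k) := by
    intro κ
    have main : ∀ X : (Fin n → ℝ) → (Fin n → ℝ),
        (X a - ∑ k ∈ S₁, c₁ k • X (bI k)) = 0 →
        (X a - ∑ k ∈ S₂, c₂ k • X (bI k)) = 0 →
        (∑ k ∈ S₁ ∪ S₂, (c₁ k - c₂ k) • X (bI k)) = 0 := by
      intro X e1 e2
      rw [sub_eq_zero] at e1 e2
      have E1 : ∑ k ∈ S₁ ∪ S₂, c₁ k • X (bI k) = X a := by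
        rw [e1]
        exact (Finset.sum_subset Finset.subset_union_left
          (fun k _ hk => by rw [h₁z k hk, zero_smul])).symm
      have E2 : ∑ k ∈ S₁ ∪ S₂, c₂ k • X (bI k) = X a := by
        rw [e2]
        exact (Finset.sum_subset Finset.subset_union_right
          (fun k _ hk => by rw [h₂z k hk, zero_smul])).symm
      simp only [sub_smul, Finset.sum_sub_distrib, E1, E2, sub_self]
    exact ⟨main (etaSeq B κ) (h₁ κ).1 (h₂ κ).1,
      main (fun v => fun j' => min (etaSeq B κ v j') 0) (h₁ κ).2 (h₂ κ).2⟩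
  have h0 := hInd.2 (S₁ ∪ S₂) (fun k => c₁ k - c₂ k)
    (fun k _ => R.sub_mem (h₁R k) (h₂R k)) hrel
  intro k
  by_cases hk : k ∈ S₁ ∪ S₂
  · have := h0 k hk
    linarith
  · rw [h₁z k (fun h => hk (Finset.mem_union_left _ h)),
      h₂z k (fun h => hk (Finset.mem_union_right _ h))]

end AuxUnique

/-- For `R` one of ℤ, ℚ, ℝ, any two positive `R`-bases for `B` agree up
to scaling each basis element by a positive unit of `R`. -/
theorem positiveBasisOver_unique {n : ℕ} (hn : 1 ≤ n) (B : Matrix (Fin n) (Fin n) ℤ)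
    (hB : IsExchangeMatrix B) (R : Subring ℝ)
    (hR : R = intSR ∨ R = ratSR ∨ R = (⊤ : Subring ℝ))
    {I J : Type} (b : I → Fin n → ℝ) (b' : J → Fin n → ℝ)
    (hb : PositiveBasisOver R B b) (hb' : PositiveBasisOver R B b') :
    ∃ σ : I ≃ J, ∀ i : I, ∃ u : ℝ, 0 < u ∧ u ∈ R ∧ u⁻¹ ∈ R ∧ b' (σ i) = u • b i := by
  classical
  have hbRmem : ∀ i j, b i j ∈ R := hb.1.1.1
  have hb'Rmem : ∀ i j, b' i j ∈ R := hb'.1.1.1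
  have hbInd := hb.1.2
  have hb'Ind := hb'.1.2
  choose S c hcR hcdiff using fun i => hb'.2 (b i) (hbRmem i)
  choose T d hdR hddiff using fun j => hb.2 (b' j) (hb'Rmem j)
  set c0 : I → J → ℝ := fun i j => if j ∈ S i then c i j else 0 with hc0def
  set d0 : J → I → ℝ := fun j k => if k ∈ T j then d j k else 0 with hd0def
  have hc0R : ∀ i j, c0 i j ∈ R := fun i j => by
    by_cases h : j ∈ S i
    · simpa [c0, h] using (hcR i j h).1
    · simp only [c0, if_neg h]; exact R.zero_mem
  have hd0R : ∀ j k, d0 j k ∈ R := fun j k => by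
    by_cases h : k ∈ T j
    · simpa [d0, h] using (hdR j k h).1
    · simp only [d0, if_neg h]; exact R.zero_mem
  have hc0nn : ∀ i j, 0 ≤ c0 i j := fun i j => by
    by_cases h : j ∈ S i
    · simpa [c0, h] using (hcR i j h).2
    · simp [c0, h]
  have hd0nn : ∀ j k, 0 ≤ d0 j k := fun j k => by
    by_cases h : k ∈ T j
    · simpa [d0, h] using (hdR j k h).2
    · simp [d0, h]
  have hc0z : ∀ i j, j ∉ S i → c0 i j = 0 := fun i j h => by simp [c0, h]
  have hd0z : ∀ j k, k ∉ T j → d0 j k = 0 := fun j k h => by simp [d0, h]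
  have hc0diff : ∀ i, IsBCoherentDiff B (b i) (S i) b' (c0 i) := fun i =>
    coherentDiff_congr' b' (b i) (S i) (c i) (c0 i) (fun j hj => by simp [c0, hj]) (hcdiff i)
  have hd0diff : ∀ j, IsBCoherentDiff B (b' j) (T j) b (d0 j) := fun j =>
    coherentDiff_congr' b (b' j) (T j) (d j) (d0 j) (fun k hk => by simp [d0, hk]) (hddiff j)
  -- the two composed coefficient matrices are identity matrices
  have hE : ∀ i k, (∑ j ∈ S i, c0 i j * d0 j k) = if k = i then 1 else 0 := by
    intro i
    refine coherentDiff_unique' R b hbInd (b i) ((S i).biUnion T) {i} _ _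
      (fun k => Subring.sum_mem _ fun j _ => R.mul_mem (hc0R i j) (hd0R j k))
      (fun k => by
        by_cases h : k = i
        · rw [if_pos h]; exact R.one_mem
        · rw [if_neg h]; exact R.zero_mem)
      (fun k hk => Finset.sum_eq_zero fun j hj => by
        rw [hd0z j k (fun hT => hk (Finset.mem_biUnion.mpr ⟨j, hj, hT⟩)), mul_zero])
      (fun k hk => by
        rw [Finset.mem_singleton] at hk
        simp [hk])
      ?_ (coherentDiff_self' b i)
    exact coherentDiff_comp' b b' (b i) (S i) (c0 i) T d0 hd0z (hc0diff i)
      (fun j _ => hd0diff j)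
  have hF : ∀ j j', (∑ k ∈ T j, d0 j k * c0 k j') = if j' = j then 1 else 0 := by
    intro j
    refine coherentDiff_unique' R b' hb'Ind (b' j) ((T j).biUnion S) {j} _ _
      (fun j' => Subring.sum_mem _ fun k _ => R.mul_mem (hd0R j k) (hc0R k j'))
      (fun j' => by
        by_cases h : j' = j
        · rw [if_pos h]; exact R.one_mem
        · rw [if_neg h]; exact R.zero_mem)
      (fun j' hj' => Finset.sum_eq_zero fun k hk => by
        rw [hc0z k j' (fun hS => hj' (Finset.mem_biUnion.mpr ⟨k, hk, hS⟩)), mul_zero])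
      (fun j' hj' => by
        rw [Finset.mem_singleton] at hj'
        simp [hj'])
      ?_ (coherentDiff_self' b' j)
    exact coherentDiff_comp' b' b (b' j) (T j) (d0 j) S c0 hc0z (hd0diff j)
      (fun k _ => hc0diff k)
  -- off-diagonal vanishing
  have V1 : ∀ i k j, k ≠ i → 0 < c0 i j → 0 < d0 j k → False := by
    intro i k j hk h1 h2
    have hjS : j ∈ S i := by
      by_contra h
      rw [hc0z i j h] at h1
      exact lt_irrefl _ h1
    have hsum : (∑ j' ∈ S i, c0 i j' * d0 j' k) = 0 := by simpa [hk] using hE i k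
    have h0 := (Finset.sum_eq_zero_iff_of_nonneg
      (fun j' _ => mul_nonneg (hc0nn i j') (hd0nn j' k))).mp hsum j hjS
    exact absurd h0 (ne_of_gt (mul_pos h1 h2))
  have V2 : ∀ j j' k, j' ≠ j → 0 < d0 j k → 0 < c0 k j' → False := by
    intro j j' k hj' h1 h2
    have hkT : k ∈ T j := by
      by_contra h
      rw [hd0z j k h] at h1
      exact lt_irrefl _ h1
    have hsum : (∑ k' ∈ T j, d0 j k' * c0 k' j') = 0 := by simpa [hj'] using hF j j'
    have h0 := (Finset.sum_eq_zero_iff_of_nonneg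
      (fun k' _ => mul_nonneg (hd0nn j k') (hc0nn k' j'))).mp hsum k hkT
    exact absurd h0 (ne_of_gt (mul_pos h1 h2))
  -- diagonal positivity: construct the matching
  have hexσ : ∀ i, ∃ j, 0 < c0 i j ∧ 0 < d0 j i := by
    intro i
    by_contra hcon
    push_neg at hcon
    have hz : (∑ j ∈ S i, c0 i j * d0 j i) = 0 := Finset.sum_eq_zero fun j _ => by
      by_cases h1 : 0 < c0 i j
      · rw [le_antisymm (hcon j h1) (hd0nn j i), mul_zero]
      · rw [le_antisymm (not_lt.mp h1) (hc0nn i j), zero_mul]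
    have h1 : (∑ j ∈ S i, c0 i j * d0 j i) = 1 := by simpa using hE i i
    rw [hz] at h1
    exact zero_ne_one h1
  have hexτ : ∀ j, ∃ i, 0 < d0 j i ∧ 0 < c0 i j := by
    intro j
    by_contra hcon
    push_neg at hcon
    have hz : (∑ k ∈ T j, d0 j k * c0 k j) = 0 := Finset.sum_eq_zero fun k _ => by
      by_cases h1 : 0 < d0 j k
      · rw [le_antisymm (hcon k h1) (hc0nn k j), mul_zero]
      · rw [le_antisymm (not_lt.mp h1) (hd0nn j k), zero_mul]
    have h1 : (∑ k ∈ T j, d0 j k * c0 k j) = 1 := by simpa using hF j j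
    rw [hz] at h1
    exact zero_ne_one h1
  choose σf hσ1 hσ2 using hexσ
  choose τf hτ1 hτ2 using hexτ
  have hleft : Function.LeftInverse τf σf := by
    intro i
    by_contra h
    exact V1 i (τf (σf i)) (σf i) h (hσ1 i) (hτ1 (σf i))
  have hright : Function.RightInverse τf σf := by
    intro j
    by_contra h
    exact V2 j (σf (τf j)) (τf j) h (hτ1 j) (hσ1 (τf j))
  refine ⟨⟨σf, τf, hleft, hright⟩, fun i => ?_⟩
  set j := σf i with hjdef
  refine ⟨d0 j i, hσ2 i, hd0R j i, ?_, ?_⟩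
  · -- the inverse is c0 i j ∈ R
    have hjS : j ∈ S i := by
      by_contra h
      have h1 := hσ1 i
      rw [← hjdef, hc0z i j h] at h1
      exact lt_irrefl _ h1
    have hprod : c0 i j * d0 j i = 1 := by
      have h1 : (∑ j' ∈ S i, c0 i j' * d0 j' i) = 1 := by simpa using hE i i
      rw [← h1]
      symm
      refine Finset.sum_eq_single_of_mem j hjS fun j' _ hne => ?_
      by_cases h1' : 0 < c0 i j'
      · by_cases h2' : 0 < d0 j' i
        · exact (V2 j j' i hne (hσ2 i) h1').elim
        · rw [le_antisymm (not_lt.mp h2') (hd0nn j' i), mul_zero]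
      · rw [le_antisymm (not_lt.mp h1') (hc0nn i j'), zero_mul]
    have hinv : (d0 j i)⁻¹ = c0 i j :=
      inv_eq_of_mul_eq_one_right (by rw [mul_comm]; exact hprod)
    rw [hinv]
    exact hc0R i j
  · -- the actual proportionality, from the empty mutation sequence
    have hdz : ∀ k, k ≠ i → d0 j k = 0 := by
      intro k hk
      by_contra h
      exact V1 i k j hk (hσ1 i) ((hd0nn j k).lt_of_ne (Ne.symm h))
    have hiT : i ∈ T j := by
      by_contra h
      have h2 := hσ2 i
      rw [← hjdef, hd0z j i h] at h2
      exact lt_irrefl _ h2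
    have h1 := sub_eq_zero.mp ((hd0diff j []).1)
    have hs : (∑ k ∈ T j, d0 j k • etaSeq B [] (b k)) = d0 j i • b i := by
      rw [Finset.sum_eq_single_of_mem i hiT (fun k _ hk => by rw [hdz k hk, zero_smul])]
      rfl
    rw [hs] at h1
    exact h1

end MutationFanPaper
end

section
/- Let B be an n×n exchange matrix and let R be one of ℤ, ℚ, ℝ. Suppose (b_i : i ∈ I) is an R-independent set for B with the following property: for every B-cone C, the set of nonnegative R-linear combinations of {b_i : i ∈ I} ∩ C contains R^n ∩ C. Then (b_i : i ∈ I) is a positive R-basis for B. -/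
open scoped BigOperators

namespace MutationFanPaper

/-- Closed form for `etaStep`. -/
lemma etaStep_apply {n : ℕ} (B : Matrix (Fin n) (Fin n) ℤ) (k : Fin n) (a : Fin n → ℝ) (j : Fin n) :
    etaStep B k a j = if j = k then -a k
      else a j + max (a k) 0 * max ((B k j : ℝ)) 0 - min (a k) 0 * min ((B k j : ℝ)) 0 := by
  unfold etaStep
  by_cases hjk : j = k
  · simp [hjk]
  · simp only [hjk, if_false]
    rcases lt_trichotomy (a k) 0 with h1 | h1 | h1 <;>
      rcases lt_trichotomy (B k j) 0 with h2 | h2 | h2 <;>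
      split_ifs with hc1 hc2 <;>
      simp_all [min_eq_left, min_eq_right, max_eq_left, max_eq_right, le_of_lt] <;>
      nlinarith

lemma continuous_etaStep {n : ℕ} (B : Matrix (Fin n) (Fin n) ℤ) (k : Fin n) :
    Continuous (etaStep B k) := by
  refine continuous_pi fun j => ?_
  have h : (fun a : Fin n → ℝ => etaStep B k a j) =
      fun a => if j = k then -a k
        else a j + max (a k) 0 * max ((B k j : ℝ)) 0 - min (a k) 0 * min ((B k j : ℝ)) 0 := by
    funext a; rw [etaStep_apply]
  rw [h]
  by_cases hj : j = k <;> simp only [hj, if_true, if_false] <;> fun_prop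

lemma continuous_etaSeq {n : ℕ} (κ : List (Fin n)) :
    ∀ B : Matrix (Fin n) (Fin n) ℤ, Continuous (etaSeq B κ) := by
  induction κ with
  | nil => intro B; exact continuous_id
  | cons k κ ih =>
    intro B
    exact (ih (mutate B k)).comp (continuous_etaStep B k)

/-- Sign compatibility of `x` with `a` (under all mutation maps). -/
def Compat {n : ℕ} (B : Matrix (Fin n) (Fin n) ℤ) (a x : Fin n → ℝ) : Prop :=
  ∀ (κ : List (Fin n)) (j : Fin n),
    (0 ≤ etaSeq B κ a j → 0 ≤ etaSeq B κ x j) ∧ (etaSeq B κ a j ≤ 0 → etaSeq B κ x j ≤ 0)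

lemma compat_of_eqB {n : ℕ} {B : Matrix (Fin n) (Fin n) ℤ} {a x : Fin n → ℝ}
    (h : eqB B a x) : Compat B a x := by
  intro κ j
  have hs := h κ j
  constructor
  · intro h0
    by_contra hneg
    push_neg at hneg
    rw [Real.sign_of_neg hneg] at hs
    rcases lt_trichotomy (etaSeq B κ a j) 0 with h' | h' | h'
    · linarith
    · rw [h', Real.sign_zero] at hs; norm_num at hs
    · rw [Real.sign_of_pos h'] at hs; norm_num at hs
  · intro h0
    by_contra hpos
    push_neg at hpos
    rw [Real.sign_of_pos hpos] at hs
    rcases lt_trichotomy (etaSeq B κ a j) 0 with h' | h' | h'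
    · rw [Real.sign_of_neg h'] at hs; norm_num at hs
    · rw [h', Real.sign_zero] at hs; norm_num at hs
    · linarith

lemma compat_of_mem_closure {n : ℕ} {B : Matrix (Fin n) (Fin n) ℤ} {a x : Fin n → ℝ}
    (h : x ∈ closure {a' | eqB B a a'}) : Compat B a x := by
  intro κ j
  have hcont : Continuous fun y => etaSeq B κ y j :=
    (continuous_apply j).comp (continuous_etaSeq κ B)
  constructor
  · intro h0
    have hsub : {a' | eqB B a a'} ⊆ {y | 0 ≤ etaSeq B κ y j} := by
      intro y hy
      exact (compat_of_eqB hy κ j).1 h0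
    have hclosed : IsClosed {y : Fin n → ℝ | 0 ≤ etaSeq B κ y j} :=
      isClosed_le continuous_const hcont
    exact closure_minimal hsub hclosed h
  · intro h0
    have hsub : {a' | eqB B a a'} ⊆ {y | etaSeq B κ y j ≤ 0} := by
      intro y hy
      exact (compat_of_eqB hy κ j).2 h0
    have hclosed : IsClosed {y : Fin n → ℝ | etaSeq B κ y j ≤ 0} :=
      isClosed_le hcont continuous_const
    exact closure_minimal hsub hclosed h

lemma etaStep_sum {n : ℕ} (B : Matrix (Fin n) (Fin n) ℤ) (k : Fin n) {ι : Type*}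
    (S : Finset ι) (v : ι → Fin n → ℝ) (c : ι → ℝ) (hc : ∀ i ∈ S, 0 ≤ c i)
    (a : Fin n → ℝ) (ha : a = ∑ i ∈ S, c i • v i)
    (hsign : ∀ i ∈ S, (0 ≤ a k → 0 ≤ v i k) ∧ (a k ≤ 0 → v i k ≤ 0)) :
    etaStep B k a = ∑ i ∈ S, c i • etaStep B k (v i) := by
  funext j
  rw [Finset.sum_apply]
  simp only [Pi.smul_apply, smul_eq_mul, etaStep_apply]
  have hak : a k = ∑ i ∈ S, c i * v i k := by
    rw [ha, Finset.sum_apply]; simp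
  have haj : a j = ∑ i ∈ S, c i * v i j := by
    rw [ha, Finset.sum_apply]; simp
  by_cases hjk : j = k
  · simp only [hjk, if_true, hak, ← Finset.sum_neg_distrib]
    exact Finset.sum_congr rfl fun i hi => by ring
  · simp only [hjk, if_false]
    rcases le_total 0 (a k) with h0 | h0
    · have hv : ∀ i ∈ S, 0 ≤ v i k := fun i hi => (hsign i hi).1 h0
      have hmaxa : max (a k) 0 = a k := max_eq_left h0
      have hmina : min (a k) 0 = 0 := min_eq_right h0
      rw [hmaxa, hmina, haj, hak, Finset.sum_mul, zero_mul, sub_zero,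
        ← Finset.sum_add_distrib]
      refine Finset.sum_congr rfl fun i hi => ?_
      rw [max_eq_left (hv i hi), min_eq_right (hv i hi)]; ring
    · have hv : ∀ i ∈ S, v i k ≤ 0 := fun i hi => (hsign i hi).2 h0
      have hmaxa : max (a k) 0 = 0 := max_eq_right h0
      have hmina : min (a k) 0 = a k := min_eq_left h0
      rw [hmaxa, hmina, haj, hak, Finset.sum_mul, zero_mul, add_zero,
        ← Finset.sum_sub_distrib]
      refine Finset.sum_congr rfl fun i hi => ?_
      rw [max_eq_right (hv i hi), min_eq_left (hv i hi)]; ring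

lemma etaSeq_sum {n : ℕ} (κ : List (Fin n)) :
    ∀ (B : Matrix (Fin n) (Fin n) ℤ) {ι : Type*} (S : Finset ι) (v : ι → Fin n → ℝ)
      (c : ι → ℝ), (∀ i ∈ S, 0 ≤ c i) → ∀ a : Fin n → ℝ, a = ∑ i ∈ S, c i • v i →
      (∀ i ∈ S, Compat B a (v i)) →
      etaSeq B κ a = ∑ i ∈ S, c i • etaSeq B κ (v i) := by
  induction κ with
  | nil => intro B ι S v c _ a ha _; simpa [etaSeq] using ha
  | cons k κ ih =>
    intro B ι S v c hc a ha hcompat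
    have hstep : etaStep B k a = ∑ i ∈ S, c i • etaStep B k (v i) :=
      etaStep_sum B k S v c hc a ha fun i hi =>
        ⟨(hcompat i hi [] k).1, (hcompat i hi [] k).2⟩
    have hcompat' : ∀ i ∈ S, Compat (mutate B k) (etaStep B k a) (etaStep B k (v i)) :=
      fun i hi κ' j => hcompat i hi (k :: κ') j
    show etaSeq (mutate B k) κ (etaStep B k a) = _
    exact ih (mutate B k) S (fun i => etaStep B k (v i)) c hc (etaStep B k a) hstep hcompat'

lemma min_etaSeq_sum {n : ℕ} (κ : List (Fin n)) (B : Matrix (Fin n) (Fin n) ℤ) {ι : Type*}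
    (S : Finset ι) (v : ι → Fin n → ℝ) (c : ι → ℝ) (hc : ∀ i ∈ S, 0 ≤ c i)
    (a : Fin n → ℝ) (ha : a = ∑ i ∈ S, c i • v i) (hcompat : ∀ i ∈ S, Compat B a (v i))
    (j : Fin n) :
    min (etaSeq B κ a j) 0 = ∑ i ∈ S, c i * min (etaSeq B κ (v i) j) 0 := by
  rcases le_total 0 (etaSeq B κ a j) with h0 | h0
  · have : ∀ i ∈ S, min (etaSeq B κ (v i) j) 0 = 0 := fun i hi =>
      min_eq_right ((hcompat i hi κ j).1 h0)
    rw [min_eq_right h0, Finset.sum_congr rfl fun i hi => by rw [this i hi, mul_zero]]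
    simp
  · have hsum := etaSeq_sum κ B S v c hc a ha hcompat
    have : ∀ i ∈ S, min (etaSeq B κ (v i) j) 0 = etaSeq B κ (v i) j := fun i hi =>
      min_eq_left ((hcompat i hi κ j).2 h0)
    rw [min_eq_left h0, Finset.sum_congr rfl fun i hi => by rw [this i hi]]
    rw [hsum, Finset.sum_apply]
    simp

/-- If `b` is an `R`-independent set for `B` such that for every `B`-cone
`C` the nonnegative `R`-linear span of the members of the family lying in `C` contains
`Rⁿ ∩ C`, then `b` is a positive `R`-basis for `B`. -/
theorem positiveBasisOver_of_independent_of_span_cones {n : ℕ} (hn : 1 ≤ n)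
    (B : Matrix (Fin n) (Fin n) ℤ) (hB : IsExchangeMatrix B) (R : Subring ℝ)
    (hR : R = intSR ∨ R = ratSR ∨ R = (⊤ : Subring ℝ))
    {I : Type} (b : I → Fin n → ℝ) (hind : IndependentOver R B b)
    (hspan : ∀ C : Set (Fin n → ℝ), IsBCone B C →
      ∀ a : Fin n → ℝ, (∀ j, a j ∈ R) → a ∈ C →
        ∃ (S : Finset I) (c : I → ℝ), (∀ i ∈ S, b i ∈ C) ∧
          (∀ i ∈ S, c i ∈ R ∧ 0 ≤ c i) ∧ a = ∑ i ∈ S, c i • b i) :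
    PositiveBasisOver R B b := by
  have hpos : ∀ a : Fin n → ℝ, (∀ j, a j ∈ R) →
      ∃ (S : Finset I) (c : I → ℝ), (∀ i ∈ S, c i ∈ R ∧ 0 ≤ c i) ∧
        IsBCoherentDiff B a S b c := by
    intro a haR
    set C : Set (Fin n → ℝ) := closure {a' | eqB B a a'} with hCdef
    have hC : IsBCone B C := ⟨{a' | eqB B a a'}, ⟨a, rfl⟩, rfl⟩
    have haC : a ∈ C := subset_closure (by exact fun κ j => rfl)
    obtain ⟨S, c, hbC, hcR, ha⟩ := hspan C hC a haR haC
    refine ⟨S, c, hcR, ?_⟩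
    have hcompat : ∀ i ∈ S, Compat B a (b i) := fun i hi =>
      compat_of_mem_closure (hbC i hi)
    have hc0 : ∀ i ∈ S, 0 ≤ c i := fun i hi => (hcR i hi).2
    intro κ
    constructor
    · rw [sub_eq_zero]
      exact etaSeq_sum κ B S b c hc0 a ha hcompat
    · rw [sub_eq_zero]
      funext j
      rw [Finset.sum_apply]
      simp only [Pi.smul_apply, smul_eq_mul]
      exact min_etaSeq_sum κ B S b c hc0 a ha hcompat j
  refine ⟨⟨⟨hind.1, ?_⟩, hind⟩, hpos⟩
  intro a haR
  obtain ⟨S, c, hcR, hdiff⟩ := hpos a haR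
  exact ⟨S, c, fun i hi => (hcR i hi).1, hdiff⟩

end MutationFanPaper
end

section
/- Let B be an n×n exchange matrix, let R be one of ℤ, ℚ, ℝ, and let Σ_{i∈S} c_i·v_i be a B-coherent linear relation with coefficients in R. Suppose that for some finite sequence κ of indices in [n], some index j ∈ [n], and some λ ∈ S, the j-th coordinate of η_κ^B(v_λ) is strictly positive while the j-th coordinate of η_κ^B(v_i) is nonpositive for every i ∈ S with i ≠ λ. Then c_λ = 0. -/
open scoped BigOperators

namespace MutationFanPaper

/-- If `Σ_{i∈S} c i • v i` is a `B`-coherent linear relation with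
coefficients in `R` (one of ℤ, ℚ, ℝ) and for some sequence `κ`, coordinate `j`, and index
`lam ∈ S` the `j`-th coordinate of `η_κ^B(v lam)` is strictly positive while the `j`-th
coordinate of `η_κ^B(v i)` is nonpositive for every other `i ∈ S`, then `c lam = 0`. -/
theorem coeff_eq_zero_of_strict_sign {n : ℕ} (hn : 1 ≤ n)
    (B : Matrix (Fin n) (Fin n) ℤ) (hB : IsExchangeMatrix B) (R : Subring ℝ)
    (hR : R = intSR ∨ R = ratSR ∨ R = (⊤ : Subring ℝ))
    {ι : Type} (S : Finset ι) (v : ι → Fin n → ℝ) (c : ι → ℝ)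
    (hc : ∀ i ∈ S, c i ∈ R) (hrel : IsBCoherentRel B S v c)
    (κ : List (Fin n)) (j : Fin n) (lam : ι) (hlam : lam ∈ S)
    (hpos : 0 < etaSeq B κ (v lam) j)
    (hneg : ∀ i ∈ S, i ≠ lam → etaSeq B κ (v i) j ≤ 0) :
    c lam = 0 := by
  obtain ⟨h1, h2⟩ := hrel κ
  have h1' := congrFun h1 j
  have h2' := congrFun h2 j
  simp only [Finset.sum_apply, Pi.smul_apply, Pi.zero_apply, smul_eq_mul] at h1' h2'
  have key : ∑ i ∈ S, c i * (etaSeq B κ (v i) j - min (etaSeq B κ (v i) j) 0) = 0 := by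
    rw [Finset.sum_congr rfl fun i _ => mul_sub (c i) _ _, Finset.sum_sub_distrib, h1', h2',
      sub_zero]
  have hz : ∀ i ∈ S, i ≠ lam → c i * (etaSeq B κ (v i) j - min (etaSeq B κ (v i) j) 0) = 0 := by
    intro i hi hne
    rw [min_eq_left (hneg i hi hne), sub_self, mul_zero]
  rw [Finset.sum_eq_single_of_mem lam hlam hz, min_eq_right hpos.le, sub_zero] at key
  rcases mul_eq_zero.mp key with h | h
  · exact h
  · exact absurd h hpos.ne'

end MutationFanPaper
end
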